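/- Let D ⊆ ℂ^d be a domain. Suppose that for every z₀ ∈ D and every exhaustion (Dₙ)_{n∈ℕ} of D with z₀ ∈ D₁, the associated functions γₙ converge to 0 pointwise on D. Then D has the Schwarz Property. -/

import Mathlib

open Filter Topology Metric

/-- `ℂ^d` with the Euclidean norm. -/
abbrev Cd (d : ℕ) := EuclideanSpace ℂ (Fin d)

variable {E : Type*} [NormedAddCommGroup E] [NormedSpace ℂ E]

/-- `supNorm f K = sup_{z ∈ K} |f z|`. -/
noncomputable def supNorm (f : E → ℂ) (K : Set E) : ℝ :=
  sSup ((fun z => ‖f z‖) '' K)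

/-- The series `∑ cₙ φₙ` converges to `f` uniformly on every compact subset of `D`. -/
def ExpandsTo (φ : ℕ → E → ℂ) (c : ℕ → ℂ) (f : E → ℂ) (D : Set E) : Prop :=
  ∀ K : Set E, K ⊆ D → IsCompact K →
    TendstoUniformlyOn (fun N z => ∑ n ∈ Finset.range N, c n * φ n z) f atTop K

/-- `φ` is a basis of the space of analytic functions on `D`: each `φₙ` is analytic on `D`
and every analytic function on `D` has a unique expansion converging uniformly on
compact subsets of `D`. -/
def IsBasisOn (φ : ℕ → E → ℂ) (D : Set E) : Prop :=
  (∀ n, DifferentiableOn ℂ (φ n) D) ∧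
    ∀ f : E → ℂ, DifferentiableOn ℂ f D → ∃! c : ℕ → ℂ, ExpandsTo φ c f D

/-- The Global Bohr Property of a basis `φ`, relative to `D`. -/
def HasGBP (φ : ℕ → E → ℂ) (D : Set E) : Prop :=
  ∀ K : Set E, K ⊆ D → IsCompact K →
    ∃ K₁ : Set E, K₁ ⊆ D ∧ IsCompact K₁ ∧ K ⊆ K₁ ∧
      ∀ (f : E → ℂ) (c : ℕ → ℂ), DifferentiableOn ℂ f D → ExpandsTo φ c f D →
        ∀ N : ℕ, ∑ n ∈ Finset.range N, ‖c n‖ * supNorm (φ n) K ≤ supNorm f K₁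

/-- Every bounded analytic function on `D` is constant. -/
def LiouvilleProperty (D : Set E) : Prop :=
  ∀ f : E → ℂ, DifferentiableOn ℂ f D → (∃ M : ℝ, ∀ z ∈ D, ‖f z‖ ≤ M) →
    ∀ z ∈ D, ∀ w ∈ D, f z = f w

/-- The Schwarz Property of a domain `D`. -/
def SchwarzProperty (D : Set E) : Prop :=
  ∀ z₀ ∈ D, ∀ K : Set E, K ⊆ D → IsCompact K → z₀ ∈ K → ∀ δ : ℝ, 0 < δ →
    ∃ K₁ : Set E, K₁ ⊆ D ∧ IsCompact K₁ ∧ K ⊆ K₁ ∧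
      ∀ (U : Set E) (f : E → ℂ), IsOpen U → K₁ ⊆ U → DifferentiableOn ℂ f U →
        supNorm (fun z => f z - f z₀) K ≤ δ * supNorm (fun z => f z - f z₀) K₁

/-- An exhaustion of `D` by relatively compact open sets. -/
def IsExhaustion (Dn : ℕ → Set E) (D : Set E) : Prop :=
  (∀ n, IsOpen (Dn n)) ∧ (∀ n, IsCompact (closure (Dn n))) ∧
    (∀ n, closure (Dn n) ⊆ Dn (n + 1)) ∧ (⋃ n, Dn n) = D

/-- `gammaFn U z₀ z = sup {|f z| : f analytic on U, f z₀ = 0, sup_U |f| ≤ 1}`. -/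
noncomputable def gammaFn (U : Set E) (z₀ z : E) : ℝ :=
  sSup {t : ℝ | ∃ f : E → ℂ, DifferentiableOn ℂ f U ∧ f z₀ = 0 ∧
    (∀ w ∈ U, ‖f w‖ ≤ 1) ∧ t = ‖f z‖}


/-- Schwarz-type estimate for bounded analytic functions in several variables. -/
lemma schwarz_bound {d : ℕ} {V : Set (Cd d)} (hV : IsOpen V) {f : Cd d → ℂ}
    (hf : DifferentiableOn ℂ f V) (hb : ∀ x ∈ V, ‖f x‖ ≤ 1) {z w : Cd d} {r : ℝ}
    (hr : 0 < r) (hball : ball z r ⊆ V) (hzw : ‖w - z‖ < r) :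
    ‖f w - f z‖ ≤ 3 * ‖w - z‖ / r := by
  rcases eq_or_ne w z with rfl | hne
  · simp [div_nonneg, hr.le]
  set u := w - z with hu
  have hs : 0 < ‖u‖ := by simpa [hu, sub_eq_zero] using hne
  set g : ℂ → ℂ := fun lam => f (z + lam • u) with hg
  have hmem : ∀ lam : ℂ, lam ∈ ball (0:ℂ) (r / ‖u‖) → z + lam • u ∈ ball z r := by
    intro lam hlam
    simp only [mem_ball, dist_eq_norm, add_sub_cancel_left, Complex.dist_eq, sub_zero] at *
    calc ‖lam • u‖ = ‖lam‖ * ‖u‖ := norm_smul _ _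
      _ < (r / ‖u‖) * ‖u‖ := by exact mul_lt_mul_of_pos_right hlam hs
      _ = r := by field_simp
  have hgd : DifferentiableOn ℂ g (ball (0:ℂ) (r / ‖u‖)) := by
    intro lam hlam
    have h1 : DifferentiableAt ℂ (fun lam : ℂ => z + lam • u) lam :=
      (differentiableAt_id.smul_const u).const_add z
    have h2 : DifferentiableAt ℂ f (z + lam • u) :=
      (hf _ (hball (hmem lam hlam))).differentiableAt (hV.mem_nhds (hball (hmem lam hlam)))
    exact (h2.comp lam h1).differentiableWithinAt
  have hg0 : g 0 = f z := by simp [hg]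
  have hmaps : Set.MapsTo g (ball (0:ℂ) (r / ‖u‖)) (ball (g 0) 3) := by
    intro lam hlam
    have h1 : ‖g lam‖ ≤ 1 := hb _ (hball (hmem lam hlam))
    have h2 : ‖g 0‖ ≤ 1 := by
      rw [hg0]; exact hb _ (hball (mem_ball_self hr))
    simp only [mem_ball, dist_eq_norm]
    calc ‖g lam - g 0‖ ≤ ‖g lam‖ + ‖g 0‖ := norm_sub_le _ _
      _ ≤ 2 := by linarith
      _ < 3 := by norm_num
  have h1mem : (1:ℂ) ∈ ball (0:ℂ) (r / ‖u‖) := by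
    simp only [mem_ball, Complex.dist_eq, sub_zero, norm_one]
    rw [lt_div_iff₀ hs]
    simpa using hzw
  have := Complex.dist_le_div_mul_dist_of_mapsTo_ball hgd (hmaps.mono_right ball_subset_closedBall) h1mem
  have hg1 : g 1 = f w := by simp [hg, hu]
  rw [hg1, hg0] at this
  simp only [dist_eq_norm, sub_zero, norm_one, mul_one] at this
  calc ‖f w - f z‖ ≤ 3 / (r / ‖u‖) := this
    _ = 3 * ‖u‖ / r := by field_simp

/-- The defining set of `gammaFn`. -/
def gammaSet (U : Set E) (z₀ z : E) : Set ℝ :=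
  {t : ℝ | ∃ f : E → ℂ, DifferentiableOn ℂ f U ∧ f z₀ = 0 ∧
    (∀ w ∈ U, ‖f w‖ ≤ 1) ∧ t = ‖f z‖}

lemma gammaFn_eq (U : Set E) (z₀ z : E) : gammaFn U z₀ z = sSup (gammaSet U z₀ z) := rfl

lemma gammaSet_nonempty (U : Set E) (z₀ z : E) : (gammaSet U z₀ z).Nonempty :=
  ⟨0, (0 : E → ℂ), differentiableOn_const 0, rfl, fun w _ => by simp, by simp⟩

lemma gammaSet_bddAbove (U : Set E) (z₀ : E) {z : E} (hz : z ∈ U) :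
    BddAbove (gammaSet U z₀ z) := by
  refine ⟨1, ?_⟩
  rintro t ⟨f, _, _, hfb, rfl⟩
  exact hfb z hz

lemma le_gammaFn {U : Set E} {z₀ z : E} (hz : z ∈ U) {f : E → ℂ}
    (hfd : DifferentiableOn ℂ f U) (hf0 : f z₀ = 0) (hfb : ∀ w ∈ U, ‖f w‖ ≤ 1) :
    ‖f z‖ ≤ gammaFn U z₀ z :=
  le_csSup (gammaSet_bddAbove U z₀ hz) ⟨f, hfd, hf0, hfb, rfl⟩

lemma gammaFn_le {U : Set E} {z₀ z : E} {a : ℝ}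
    (h : ∀ f : E → ℂ, DifferentiableOn ℂ f U → f z₀ = 0 → (∀ w ∈ U, ‖f w‖ ≤ 1) →
      ‖f z‖ ≤ a) : gammaFn U z₀ z ≤ a := by
  refine csSup_le (gammaSet_nonempty U z₀ z) ?_
  rintro t ⟨f, hfd, hf0, hfb, rfl⟩
  exact h f hfd hf0 hfb

/-- Equicontinuity of the `gammaFn` family. -/
lemma gammaFn_close {d : ℕ} {V : Set (Cd d)} (hV : IsOpen V) {z₀ z w : Cd d} {r : ℝ}
    (hw : w ∈ V) (hr : 0 < r) (hb : ball w r ⊆ V) (hzw : ‖z - w‖ < r) :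
    gammaFn V z₀ z ≤ gammaFn V z₀ w + 3 * ‖z - w‖ / r := by
  refine gammaFn_le fun f hfd hf0 hfb => ?_
  have h1 : ‖f z - f w‖ ≤ 3 * ‖z - w‖ / r := schwarz_bound hV hfd hfb hr hb hzw
  have h2 : ‖f w‖ ≤ gammaFn V z₀ w := le_gammaFn hw hfd hf0 hfb
  calc ‖f z‖ ≤ ‖f w‖ + ‖f z - f w‖ := by
        simpa using norm_add_le (f w) (f z - f w)
      _ ≤ gammaFn V z₀ w + 3 * ‖z - w‖ / r := add_le_add h2 h1

/-- if for every `z₀ ∈ D` and every exhaustion `(Dₙ)` of `D` with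
`z₀ ∈ D₁` the associated functions `γₙ` tend to `0` pointwise on `D`, then the domain
`D` has the Schwarz Property. -/
theorem stmt12 (d : ℕ) (D : Set (Cd d)) (hD : IsOpen D) (hDconn : IsConnected D)
    (hγ : ∀ z₀ ∈ D, ∀ Dn : ℕ → Set (Cd d), IsExhaustion Dn D → z₀ ∈ Dn 0 →
      ∀ z ∈ D, ∀ ε : ℝ, 0 < ε → ∃ N : ℕ, ∀ n : ℕ, N ≤ n →
        z ∈ Dn n ∧ gammaFn (Dn n) z₀ z < ε) :
    SchwarzProperty D := by
  intro z₀ hz₀D K hKD hK hz₀K δ hδ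
  -- distance from K to the complement, and a bounding radius
  obtain ⟨ρ, hρ, hρsub⟩ := hK.exists_thickening_subset_open hD hKD
  obtain ⟨R', hR'⟩ := hK.isBounded.subset_ball (0 : Cd d)
  set R : ℝ := max R' 0 with hR
  have hR0 : 0 ≤ R := le_max_right _ _
  set ε : ℝ := ρ / 2 with hε
  have hεpos : 0 < ε := by positivity
  -- the exhaustion
  set Dn : ℕ → Set (Cd d) := fun n =>
    ball (0 : Cd d) (R + n + 1) ∩ {z | ENNReal.ofReal (ε / (n + 1)) < EMetric.infEdist z Dᶜ}
    with hDn
  have hDnopen : ∀ n, IsOpen (Dn n) := fun n =>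
    isOpen_ball.inter (isOpen_lt continuous_const EMetric.continuous_infEdist)
  have hDnsub : ∀ n, Dn n ⊆ D := by
    intro n z hz
    have h1 : 0 < EMetric.infEdist z Dᶜ :=
      lt_of_le_of_lt zero_le hz.2
    have h2 : z ∉ closure Dᶜ := EMetric.infEdist_pos_iff_notMem_closure.mp h1
    rw [hD.isClosed_compl.closure_eq] at h2
    simpa using h2
  have hclos : ∀ n, closure (Dn n) ⊆
      closedBall (0 : Cd d) (R + n + 1) ∩ {z | ENNReal.ofReal (ε / (n + 1)) ≤ EMetric.infEdist z Dᶜ} := by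
    intro n
    refine closure_minimal ?_
      (isClosed_closedBall.inter (isClosed_le continuous_const EMetric.continuous_infEdist))
    intro z hz
    refine ⟨ball_subset_closedBall hz.1, ?_⟩
    have h2 := hz.2
    rw [Set.mem_setOf_eq] at h2 ⊢
    exact h2.le
  have hcomp : ∀ n, IsCompact (closure (Dn n)) := by
    intro n
    exact (isCompact_closedBall (0 : Cd d) (R + n + 1)).of_isClosed_subset isClosed_closure
      ((hclos n).trans Set.inter_subset_left)
  have hchain : ∀ n, closure (Dn n) ⊆ Dn (n + 1) := by
    intro n z hz
    obtain ⟨h1, h2⟩ := hclos n hz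
    rw [Set.mem_setOf_eq] at h2
    constructor
    · refine lt_of_le_of_lt (mem_closedBall.mp h1) ?_
      push_cast; linarith
    · refine lt_of_lt_of_le ?_ h2
      refine ENNReal.ofReal_lt_ofReal_iff (by positivity) |>.mpr ?_
      have : (0:ℝ) < (n:ℝ) + 1 := by positivity
      refine div_lt_div_of_pos_left hεpos this ?_
      push_cast; linarith
  have hmono : Monotone Dn := by
    refine monotone_nat_of_le_succ fun k => subset_closure.trans (hchain k)
  have hunion : (⋃ n, Dn n) = D := by
    apply Set.Subset.antisymm
    · exact Set.iUnion_subset hDnsub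
    · intro z hz
      have hzc : 0 < EMetric.infEdist z Dᶜ := by
        refine EMetric.infEdist_pos_iff_notMem_closure.mpr ?_
        rw [hD.isClosed_compl.closure_eq]
        simpa using hz
      obtain ⟨n₂, hn₂⟩ : ∃ n : ℕ, ENNReal.ofReal (ε / (n + 1)) < EMetric.infEdist z Dᶜ := by
        rcases eq_or_ne (EMetric.infEdist z Dᶜ) ⊤ with htop | htop
        · exact ⟨0, by rw [htop]; exact ENNReal.ofReal_lt_top⟩
        · set t : ℝ := (EMetric.infEdist z Dᶜ).toReal with ht
          have htpos : 0 < t := ENNReal.toReal_pos (ne_of_gt hzc) htop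
          obtain ⟨m, hm⟩ := exists_nat_gt (ε / t)
          refine ⟨m, ?_⟩
          have h1 : ε / ((m:ℝ) + 1) < t := by
            rw [div_lt_iff₀ (by positivity)]
            rw [div_lt_iff₀ htpos] at hm
            nlinarith
          calc ENNReal.ofReal (ε / ((m:ℝ) + 1)) < ENNReal.ofReal t :=
                ENNReal.ofReal_lt_ofReal_iff htpos |>.mpr h1
            _ = EMetric.infEdist z Dᶜ := ENNReal.ofReal_toReal htop
      obtain ⟨n₁, hn₁⟩ := exists_nat_gt ‖z‖
      refine Set.mem_iUnion.mpr ⟨max n₁ n₂, ?_, ?_⟩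
      · rw [mem_ball, dist_zero_right]
        have : (n₁:ℝ) ≤ (max n₁ n₂ : ℕ) := by exact_mod_cast Nat.le_max_left n₁ n₂
        linarith
      · refine lt_of_le_of_lt ?_ hn₂
        refine ENNReal.ofReal_le_ofReal ?_
        have h2 : (n₂:ℝ) + 1 ≤ (max n₁ n₂ : ℕ) + 1 := by
          have : (n₂:ℝ) ≤ (max n₁ n₂ : ℕ) := by exact_mod_cast Nat.le_max_right n₁ n₂
          linarith
        exact div_le_div_of_nonneg_left hεpos.le (by positivity) h2
  have hexh : IsExhaustion Dn D := ⟨hDnopen, hcomp, hchain, hunion⟩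
  -- K sits inside Dn 0
  have hK0 : K ⊆ Dn 0 := by
    intro z hz
    constructor
    · have := mem_ball.mp (hR' hz)
      rw [mem_ball, dist_zero_right]
      rw [dist_zero_right] at this
      have hRR : R' ≤ R := le_max_left _ _
      push_cast; linarith
    · have hdist : ENNReal.ofReal ρ ≤ EMetric.infEdist z Dᶜ := by
        refine EMetric.le_infEdist.mpr ?_
        intro y hy
        by_contra hcon
        push_neg at hcon
        have : dist z y < ρ := by
          rw [← edist_lt_ofReal]; exact hcon
        have : y ∈ thickening ρ K := mem_thickening_iff.mpr ⟨z, hz, by rwa [dist_comm]⟩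
        exact hy (hρsub this)
      refine lt_of_lt_of_le ?_ hdist
      refine ENNReal.ofReal_lt_ofReal_iff hρ |>.mpr ?_
      rw [hε]; push_cast; linarith
  have hz₀0 : z₀ ∈ Dn 0 := hK0 hz₀K
  -- a safety radius around K inside every Dn n
  obtain ⟨r, hr, hrsub⟩ := hK.exists_thickening_subset_open (hDnopen 0) hK0
  have hballs : ∀ x ∈ K, ∀ n, ball x r ⊆ Dn n := by
    intro x hx n
    refine Set.Subset.trans ?_ ((hrsub).trans (hmono (Nat.zero_le n)))
    intro y hy
    exact mem_thickening_iff.mpr ⟨x, hx, mem_ball.mp hy⟩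
  -- finite cover of K by small balls
  set η : ℝ := min r (δ * r / 6) / 2 with hη
  have hηpos : 0 < η := by
    have : 0 < min r (δ * r / 6) := lt_min hr (by positivity)
    positivity
  have hηr : η < r := by
    have h1 : min r (δ * r / 6) ≤ r := min_le_left _ _
    rw [hη]; linarith
  have hηδ : 3 * η / r ≤ δ / 2 := by
    have h1 : min r (δ * r / 6) ≤ δ * r / 6 := min_le_right _ _
    rw [hη, div_le_div_iff₀ (by positivity) (by norm_num)]
    nlinarith
  obtain ⟨T, hTK, hTcov⟩ := hK.elim_nhds_subcover (fun x => ball x η)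
    (fun x _ => ball_mem_nhds x hηpos)
  -- pointwise convergence of γ at centers
  have hpt : ∀ x, x ∈ D → ∃ N : ℕ, ∀ m : ℕ, N ≤ m →
      x ∈ Dn m ∧ gammaFn (Dn m) z₀ x < δ / 2 :=
    fun x hx => hγ z₀ hz₀D Dn hexh hz₀0 x hx (δ / 2) (by positivity)
  choose! Nf hNf using hpt
  set n : ℕ := T.sup Nf with hn
  -- uniform smallness on K
  have hKgamma : ∀ z ∈ K, gammaFn (Dn n) z₀ z ≤ δ := by
    intro z hz
    obtain ⟨x, hxT, hxball⟩ := Set.mem_iUnion₂.mp (hTcov hz)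
    have hxK : x ∈ K := hTK x hxT
    have hxD : x ∈ D := hKD hxK
    have hNx : Nf x ≤ n := Finset.le_sup hxT
    have hgx : gammaFn (Dn n) z₀ x < δ / 2 := (hNf x hxD n hNx).2
    have hdzx : ‖z - x‖ < r := by
      have := mem_ball.mp hxball
      rw [dist_eq_norm] at this
      linarith
    have hclose := gammaFn_close (z₀ := z₀) (hDnopen n) ((hmono (Nat.zero_le n)) (hK0 hxK))
      hr (hballs x hxK n) hdzx
    have hdη : ‖z - x‖ ≤ η := by
      have := mem_ball.mp hxball
      rw [dist_eq_norm] at this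
      linarith
    have h3 : 3 * ‖z - x‖ / r ≤ 3 * η / r := by gcongr
    calc gammaFn (Dn n) z₀ z ≤ gammaFn (Dn n) z₀ x + 3 * ‖z - x‖ / r := hclose
      _ ≤ δ / 2 + 3 * η / r := add_le_add hgx.le h3
      _ ≤ δ / 2 + δ / 2 := add_le_add le_rfl hηδ
      _ = δ := by ring
  -- the compact set K₁
  refine ⟨closure (Dn n), (hchain n).trans (hDnsub (n + 1)), hcomp n,
    (hK0.trans (hmono (Nat.zero_le n))).trans subset_closure, ?_⟩
  intro U f hU hK₁U hf
  have hDnU : Dn n ⊆ U := subset_closure.trans hK₁U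
  set M : ℝ := supNorm (fun z => f z - f z₀) (closure (Dn n)) with hM
  have hfc : ContinuousOn (fun z => ‖f z - f z₀‖) (closure (Dn n)) :=
    ((hf.continuousOn.sub continuousOn_const).norm).mono hK₁U
  have hbdd : BddAbove ((fun z => ‖f z - f z₀‖) '' closure (Dn n)) :=
    (hcomp n).bddAbove_image hfc
  have hz₀K₁ : z₀ ∈ closure (Dn n) := subset_closure ((hmono (Nat.zero_le n)) hz₀0)
  have hle : ∀ x ∈ closure (Dn n), ‖f x - f z₀‖ ≤ M :=
    fun x hx => le_csSup hbdd ⟨x, hx, rfl⟩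
  have hM0 : 0 ≤ M := le_trans (norm_nonneg _) (hle z₀ hz₀K₁)
  have key : ∀ z ∈ K, ‖f z - f z₀‖ ≤ δ * M := by
    intro z hz
    have hzK₁ : z ∈ closure (Dn n) := subset_closure ((hmono (Nat.zero_le n)) (hK0 hz))
    rcases eq_or_lt_of_le hM0 with hM0' | hMpos
    · have := hle z hzK₁
      rw [← hM0'] at this ⊢
      simpa using this
    · set g : Cd d → ℂ := fun x => (f x - f z₀) / (M : ℂ) with hg
      have hgd : DifferentiableOn ℂ g (Dn n) := by
        rw [hg]
        simp only [div_eq_mul_inv]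
        exact ((hf.mono hDnU).sub (differentiableOn_const (f z₀))).mul_const _
      have hg0 : g z₀ = 0 := by simp [hg]
      have hgnorm : ∀ x, ‖g x‖ = ‖f x - f z₀‖ / M := by
        intro x
        rw [hg]
        simp only [norm_div, Complex.norm_real]
        rw [Real.norm_of_nonneg hM0]
      have hgb : ∀ w ∈ Dn n, ‖g w‖ ≤ 1 := by
        intro w hw
        rw [hgnorm, div_le_one hMpos]
        exact hle w (subset_closure hw)
      have hzn : z ∈ Dn n := (hmono (Nat.zero_le n)) (hK0 hz)
      have h1 : ‖g z‖ ≤ gammaFn (Dn n) z₀ z := le_gammaFn hzn hgd hg0 hgb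
      have h2 : ‖g z‖ ≤ δ := h1.trans (hKgamma z hz)
      have h3 : ‖f z - f z₀‖ = ‖g z‖ * M := by
        rw [hgnorm]; field_simp
      rw [h3]
      exact mul_le_mul_of_nonneg_right h2 hM0
  refine csSup_le ⟨‖f z₀ - f z₀‖, ⟨z₀, hz₀K, rfl⟩⟩ ?_
  rintro t ⟨z, hz, rfl⟩
  exact key z hz
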